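/- Define x_r(t, θ) = sin(2π·0.25·t + 2π·0.25·θ) + sin(−2π·0.25·t + 2π·0.75·θ), the reconstruction of the process sin(2π·0.25(t+θ)) + sin(2π·0.75(t+θ)) undersampled with Δt = 1. Then the sixth moment satisfies, for every t ∈ ℝ, (1/4) ∫_0^4 x_r(t, θ)⁶ dθ = 25/4 − (45/16)·cos(2π t). In particular the sixth moment is a nonconstant function of t, so the reconstructed process is nonstationary, even though both components of the reconstruction lie at the same frequency (0.25 and its negative). -/

import Mathlib

open Real

set_option maxHeartbeats 4000000
set_option maxRecDepth 100000

lemma cosm2 (y : ℝ) : Real.cos (2*y) = 1*Real.cos y^2 - 1*Real.sin y^2 := by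
  rw [show (2:ℝ)*y = y + y by ring, Real.cos_add]; ring
lemma sinm2 (y : ℝ) : Real.sin (2*y) = 2*Real.sin y*Real.cos y := by
  rw [show (2:ℝ)*y = y + y by ring, Real.sin_add]; ring
lemma cosm3 (y : ℝ) : Real.cos (3*y) = 1*Real.cos y^3 - 3*Real.sin y^2*Real.cos y := by
  rw [show (3:ℝ)*y = 2*y + y by ring, Real.cos_add, cosm2, sinm2]; ring
lemma sinm3 (y : ℝ) : Real.sin (3*y) = 3*Real.sin y*Real.cos y^2 - 1*Real.sin y^3 := by
  rw [show (3:ℝ)*y = 2*y + y by ring, Real.sin_add, cosm2, sinm2]; ring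
lemma cosm4 (y : ℝ) : Real.cos (4*y) = 1*Real.cos y^4 - 6*Real.sin y^2*Real.cos y^2 + 1*Real.sin y^4 := by
  rw [show (4:ℝ)*y = 3*y + y by ring, Real.cos_add, cosm3, sinm3]; ring
lemma sinm4 (y : ℝ) : Real.sin (4*y) = 4*Real.sin y*Real.cos y^3 - 4*Real.sin y^3*Real.cos y := by
  rw [show (4:ℝ)*y = 3*y + y by ring, Real.sin_add, cosm3, sinm3]; ring
lemma cosm5 (y : ℝ) : Real.cos (5*y) = 1*Real.cos y^5 - 10*Real.sin y^2*Real.cos y^3 + 5*Real.sin y^4*Real.cos y := by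
  rw [show (5:ℝ)*y = 4*y + y by ring, Real.cos_add, cosm4, sinm4]; ring
lemma sinm5 (y : ℝ) : Real.sin (5*y) = 5*Real.sin y*Real.cos y^4 - 10*Real.sin y^3*Real.cos y^2 + 1*Real.sin y^5 := by
  rw [show (5:ℝ)*y = 4*y + y by ring, Real.sin_add, cosm4, sinm4]; ring
lemma cosm6 (y : ℝ) : Real.cos (6*y) = 1*Real.cos y^6 - 15*Real.sin y^2*Real.cos y^4 + 15*Real.sin y^4*Real.cos y^2 - 1*Real.sin y^6 := by
  rw [show (6:ℝ)*y = 5*y + y by ring, Real.cos_add, cosm5, sinm5]; ring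
lemma sinm6 (y : ℝ) : Real.sin (6*y) = 6*Real.sin y*Real.cos y^5 - 20*Real.sin y^3*Real.cos y^3 + 6*Real.sin y^5*Real.cos y := by
  rw [show (6:ℝ)*y = 5*y + y by ring, Real.sin_add, cosm5, sinm5]; ring
lemma cosm7 (y : ℝ) : Real.cos (7*y) = 1*Real.cos y^7 - 21*Real.sin y^2*Real.cos y^5 + 35*Real.sin y^4*Real.cos y^3 - 7*Real.sin y^6*Real.cos y := by
  rw [show (7:ℝ)*y = 6*y + y by ring, Real.cos_add, cosm6, sinm6]; ring
lemma sinm7 (y : ℝ) : Real.sin (7*y) = 7*Real.sin y*Real.cos y^6 - 35*Real.sin y^3*Real.cos y^4 + 21*Real.sin y^5*Real.cos y^2 - 1*Real.sin y^7 := by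
  rw [show (7:ℝ)*y = 6*y + y by ring, Real.sin_add, cosm6, sinm6]; ring
lemma cosm8 (y : ℝ) : Real.cos (8*y) = 1*Real.cos y^8 - 28*Real.sin y^2*Real.cos y^6 + 70*Real.sin y^4*Real.cos y^4 - 28*Real.sin y^6*Real.cos y^2 + 1*Real.sin y^8 := by
  rw [show (8:ℝ)*y = 7*y + y by ring, Real.cos_add, cosm7, sinm7]; ring
lemma sinm8 (y : ℝ) : Real.sin (8*y) = 8*Real.sin y*Real.cos y^7 - 56*Real.sin y^3*Real.cos y^5 + 56*Real.sin y^5*Real.cos y^3 - 8*Real.sin y^7*Real.cos y := by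
  rw [show (8:ℝ)*y = 7*y + y by ring, Real.sin_add, cosm7, sinm7]; ring
lemma cosm9 (y : ℝ) : Real.cos (9*y) = 1*Real.cos y^9 - 36*Real.sin y^2*Real.cos y^7 + 126*Real.sin y^4*Real.cos y^5 - 84*Real.sin y^6*Real.cos y^3 + 9*Real.sin y^8*Real.cos y := by
  rw [show (9:ℝ)*y = 8*y + y by ring, Real.cos_add, cosm8, sinm8]; ring
lemma sinm9 (y : ℝ) : Real.sin (9*y) = 9*Real.sin y*Real.cos y^8 - 84*Real.sin y^3*Real.cos y^6 + 126*Real.sin y^5*Real.cos y^4 - 36*Real.sin y^7*Real.cos y^2 + 1*Real.sin y^9 := by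
  rw [show (9:ℝ)*y = 8*y + y by ring, Real.sin_add, cosm8, sinm8]; ring
lemma cosm10 (y : ℝ) : Real.cos (10*y) = 1*Real.cos y^10 - 45*Real.sin y^2*Real.cos y^8 + 210*Real.sin y^4*Real.cos y^6 - 210*Real.sin y^6*Real.cos y^4 + 45*Real.sin y^8*Real.cos y^2 - 1*Real.sin y^10 := by
  rw [show (10:ℝ)*y = 9*y + y by ring, Real.cos_add, cosm9, sinm9]; ring
lemma sinm10 (y : ℝ) : Real.sin (10*y) = 10*Real.sin y*Real.cos y^9 - 120*Real.sin y^3*Real.cos y^7 + 252*Real.sin y^5*Real.cos y^5 - 120*Real.sin y^7*Real.cos y^3 + 10*Real.sin y^9*Real.cos y := by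
  rw [show (10:ℝ)*y = 9*y + y by ring, Real.sin_add, cosm9, sinm9]; ring
lemma cosm11 (y : ℝ) : Real.cos (11*y) = 1*Real.cos y^11 - 55*Real.sin y^2*Real.cos y^9 + 330*Real.sin y^4*Real.cos y^7 - 462*Real.sin y^6*Real.cos y^5 + 165*Real.sin y^8*Real.cos y^3 - 11*Real.sin y^10*Real.cos y := by
  rw [show (11:ℝ)*y = 10*y + y by ring, Real.cos_add, cosm10, sinm10]; ring
lemma sinm11 (y : ℝ) : Real.sin (11*y) = 11*Real.sin y*Real.cos y^10 - 165*Real.sin y^3*Real.cos y^8 + 462*Real.sin y^5*Real.cos y^6 - 330*Real.sin y^7*Real.cos y^4 + 55*Real.sin y^9*Real.cos y^2 - 1*Real.sin y^11 := by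
  rw [show (11:ℝ)*y = 10*y + y by ring, Real.sin_add, cosm10, sinm10]; ring
lemma cosm12 (y : ℝ) : Real.cos (12*y) = 1*Real.cos y^12 - 66*Real.sin y^2*Real.cos y^10 + 495*Real.sin y^4*Real.cos y^8 - 924*Real.sin y^6*Real.cos y^6 + 495*Real.sin y^8*Real.cos y^4 - 66*Real.sin y^10*Real.cos y^2 + 1*Real.sin y^12 := by
  rw [show (12:ℝ)*y = 11*y + y by ring, Real.cos_add, cosm11, sinm11]; ring
lemma sinm12 (y : ℝ) : Real.sin (12*y) = 12*Real.sin y*Real.cos y^11 - 220*Real.sin y^3*Real.cos y^9 + 792*Real.sin y^5*Real.cos y^7 - 792*Real.sin y^7*Real.cos y^5 + 220*Real.sin y^9*Real.cos y^3 - 12*Real.sin y^11*Real.cos y := by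
  rw [show (12:ℝ)*y = 11*y + y by ring, Real.sin_add, cosm11, sinm11]; ring
lemma cosm13 (y : ℝ) : Real.cos (13*y) = 1*Real.cos y^13 - 78*Real.sin y^2*Real.cos y^11 + 715*Real.sin y^4*Real.cos y^9 - 1716*Real.sin y^6*Real.cos y^7 + 1287*Real.sin y^8*Real.cos y^5 - 286*Real.sin y^10*Real.cos y^3 + 13*Real.sin y^12*Real.cos y := by
  rw [show (13:ℝ)*y = 12*y + y by ring, Real.cos_add, cosm12, sinm12]; ring
lemma sinm13 (y : ℝ) : Real.sin (13*y) = 13*Real.sin y*Real.cos y^12 - 286*Real.sin y^3*Real.cos y^10 + 1287*Real.sin y^5*Real.cos y^8 - 1716*Real.sin y^7*Real.cos y^6 + 715*Real.sin y^9*Real.cos y^4 - 78*Real.sin y^11*Real.cos y^2 + 1*Real.sin y^13 := by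
  rw [show (13:ℝ)*y = 12*y + y by ring, Real.sin_add, cosm12, sinm12]; ring
lemma cosm14 (y : ℝ) : Real.cos (14*y) = 1*Real.cos y^14 - 91*Real.sin y^2*Real.cos y^12 + 1001*Real.sin y^4*Real.cos y^10 - 3003*Real.sin y^6*Real.cos y^8 + 3003*Real.sin y^8*Real.cos y^6 - 1001*Real.sin y^10*Real.cos y^4 + 91*Real.sin y^12*Real.cos y^2 - 1*Real.sin y^14 := by
  rw [show (14:ℝ)*y = 13*y + y by ring, Real.cos_add, cosm13, sinm13]; ring
lemma sinm14 (y : ℝ) : Real.sin (14*y) = 14*Real.sin y*Real.cos y^13 - 364*Real.sin y^3*Real.cos y^11 + 2002*Real.sin y^5*Real.cos y^9 - 3432*Real.sin y^7*Real.cos y^7 + 2002*Real.sin y^9*Real.cos y^5 - 364*Real.sin y^11*Real.cos y^3 + 14*Real.sin y^13*Real.cos y := by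
  rw [show (14:ℝ)*y = 13*y + y by ring, Real.sin_add, cosm13, sinm13]; ring
lemma cosm15 (y : ℝ) : Real.cos (15*y) = 1*Real.cos y^15 - 105*Real.sin y^2*Real.cos y^13 + 1365*Real.sin y^4*Real.cos y^11 - 5005*Real.sin y^6*Real.cos y^9 + 6435*Real.sin y^8*Real.cos y^7 - 3003*Real.sin y^10*Real.cos y^5 + 455*Real.sin y^12*Real.cos y^3 - 15*Real.sin y^14*Real.cos y := by
  rw [show (15:ℝ)*y = 14*y + y by ring, Real.cos_add, cosm14, sinm14]; ring
lemma sinm15 (y : ℝ) : Real.sin (15*y) = 15*Real.sin y*Real.cos y^14 - 455*Real.sin y^3*Real.cos y^12 + 3003*Real.sin y^5*Real.cos y^10 - 6435*Real.sin y^7*Real.cos y^8 + 5005*Real.sin y^9*Real.cos y^6 - 1365*Real.sin y^11*Real.cos y^4 + 105*Real.sin y^13*Real.cos y^2 - 1*Real.sin y^15 := by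
  rw [show (15:ℝ)*y = 14*y + y by ring, Real.sin_add, cosm14, sinm14]; ring
lemma cosm16 (y : ℝ) : Real.cos (16*y) = 1*Real.cos y^16 - 120*Real.sin y^2*Real.cos y^14 + 1820*Real.sin y^4*Real.cos y^12 - 8008*Real.sin y^6*Real.cos y^10 + 12870*Real.sin y^8*Real.cos y^8 - 8008*Real.sin y^10*Real.cos y^6 + 1820*Real.sin y^12*Real.cos y^4 - 120*Real.sin y^14*Real.cos y^2 + 1*Real.sin y^16 := by
  rw [show (16:ℝ)*y = 15*y + y by ring, Real.cos_add, cosm15, sinm15]; ring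
lemma sinm16 (y : ℝ) : Real.sin (16*y) = 16*Real.sin y*Real.cos y^15 - 560*Real.sin y^3*Real.cos y^13 + 4368*Real.sin y^5*Real.cos y^11 - 11440*Real.sin y^7*Real.cos y^9 + 11440*Real.sin y^9*Real.cos y^7 - 4368*Real.sin y^11*Real.cos y^5 + 560*Real.sin y^13*Real.cos y^3 - 16*Real.sin y^15*Real.cos y := by
  rw [show (16:ℝ)*y = 15*y + y by ring, Real.sin_add, cosm15, sinm15]; ring
lemma cosm17 (y : ℝ) : Real.cos (17*y) = 1*Real.cos y^17 - 136*Real.sin y^2*Real.cos y^15 + 2380*Real.sin y^4*Real.cos y^13 - 12376*Real.sin y^6*Real.cos y^11 + 24310*Real.sin y^8*Real.cos y^9 - 19448*Real.sin y^10*Real.cos y^7 + 6188*Real.sin y^12*Real.cos y^5 - 680*Real.sin y^14*Real.cos y^3 + 17*Real.sin y^16*Real.cos y := by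
  rw [show (17:ℝ)*y = 16*y + y by ring, Real.cos_add, cosm16, sinm16]; ring
lemma sinm17 (y : ℝ) : Real.sin (17*y) = 17*Real.sin y*Real.cos y^16 - 680*Real.sin y^3*Real.cos y^14 + 6188*Real.sin y^5*Real.cos y^12 - 19448*Real.sin y^7*Real.cos y^10 + 24310*Real.sin y^9*Real.cos y^8 - 12376*Real.sin y^11*Real.cos y^6 + 2380*Real.sin y^13*Real.cos y^4 - 136*Real.sin y^15*Real.cos y^2 + 1*Real.sin y^17 := by
  rw [show (17:ℝ)*y = 16*y + y by ring, Real.sin_add, cosm16, sinm16]; ring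
lemma cosm18 (y : ℝ) : Real.cos (18*y) = 1*Real.cos y^18 - 153*Real.sin y^2*Real.cos y^16 + 3060*Real.sin y^4*Real.cos y^14 - 18564*Real.sin y^6*Real.cos y^12 + 43758*Real.sin y^8*Real.cos y^10 - 43758*Real.sin y^10*Real.cos y^8 + 18564*Real.sin y^12*Real.cos y^6 - 3060*Real.sin y^14*Real.cos y^4 + 153*Real.sin y^16*Real.cos y^2 - 1*Real.sin y^18 := by
  rw [show (18:ℝ)*y = 17*y + y by ring, Real.cos_add, cosm17, sinm17]; ring
lemma sinm18 (y : ℝ) : Real.sin (18*y) = 18*Real.sin y*Real.cos y^17 - 816*Real.sin y^3*Real.cos y^15 + 8568*Real.sin y^5*Real.cos y^13 - 31824*Real.sin y^7*Real.cos y^11 + 48620*Real.sin y^9*Real.cos y^9 - 31824*Real.sin y^11*Real.cos y^7 + 8568*Real.sin y^13*Real.cos y^5 - 816*Real.sin y^15*Real.cos y^3 + 18*Real.sin y^17*Real.cos y := by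
  rw [show (18:ℝ)*y = 17*y + y by ring, Real.sin_add, cosm17, sinm17]; ring

lemma key (s c st ct : ℝ) (hs : s^2 + c^2 = 1) (ht : st^2 + ct^2 = 1) :
    (st*c + ct*s + ((3*s*c^2 - 1*s^3)*ct - (1*c^3 - 3*s^2*c)*st))^6 = ((25/4) - (45/16)*ct^4 + (135/8)*st^2*ct^2 - (45/16)*st^4) * 1 + ((((75/32)*ct^2 - (9/32)*ct^6 - (75/32)*st^2 + (135/32)*st^2*ct^4 - (135/32)*st^4*ct^2 + (9/32)*st^6) * (1*c^2 - 1*s^2) + ((525/16)*st*ct - (63/16)*st*ct^5 + (105/8)*st^3*ct^3 - (63/16)*st^5*ct) * (2*s*c)) + (((-(75/8) + (39/8)*ct^4 - (117/4)*st^2*ct^2 + (39/8)*st^4) * (1*c^4 - 6*s^2*c^2 + 1*s^4) + ((21/2)*st*ct^3 - (21/2)*st^3*ct) * (4*s*c^3 - 4*s^3*c)) + (((-(135/32)*ct^2 + (19/32)*ct^6 + (135/32)*st^2 - (285/32)*st^2*ct^4 + (285/32)*st^4*ct^2 - (19/32)*st^6) * (1*c^6 - 15*s^2*c^4 + 15*s^4*c^2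 - 1*s^6) + (-(315/16)*st*ct + (63/16)*st*ct^5 - (105/8)*st^3*ct^3 + (63/16)*st^5*ct) * (6*s*c^5 - 20*s^3*c^3 + 6*s^5*c)) + ((((15/4) - 3*ct^4 + 18*st^2*ct^2 - 3*st^4) * (1*c^8 - 28*s^2*c^6 + 70*s^4*c^4 - 28*s^6*c^2 + 1*s^8) + (-(21/2)*st*ct^3 + (21/2)*st^3*ct) * (8*s*c^7 - 56*s^3*c^5 + 56*s^5*c^3 - 8*s^7*c)) + ((((75/32)*ct^2 - (15/32)*ct^6 - (75/32)*st^2 + (225/32)*st^2*ct^4 - (225/32)*st^4*ct^2 + (15/32)*st^6) * (1*c^10 - 45*s^2*c^8 + 210*s^4*c^6 - 210*s^6*c^4 + 45*s^8*c^2 - 1*s^10) + ((105/16)*st*ct - (45/16)*st*ct^5 + (75/8)*st^3*ct^3 - (45/16)*st^5*ct) * (10*s*c^9 - 120*s^3*c^7 + 252*s^5*c^5 - 120*s^7*c^3 + 10*s^9*c)) + (((-(5/8) + (9/8)*ct^4 - (27/4)*st^2*ct^2 + (9/8)*st^4) * (1*c^12 - 66*s^2*c^10 + 495*s^4*c^8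 - 924*s^6*c^6 + 495*s^8*c^4 - 66*s^10*c^2 + 1*s^12) + ((9/2)*st*ct^3 - (9/2)*st^3*ct) * (12*s*c^11 - 220*s^3*c^9 + 792*s^5*c^7 - 792*s^7*c^5 + 220*s^9*c^3 - 12*s^11*c)) + (((-(15/32)*ct^2 + (3/16)*ct^6 + (15/32)*st^2 - (45/16)*st^2*ct^4 + (45/16)*st^4*ct^2 - (3/16)*st^6) * (1*c^14 - 91*s^2*c^12 + 1001*s^4*c^10 - 3003*s^6*c^8 + 3003*s^8*c^6 - 1001*s^10*c^4 + 91*s^12*c^2 - 1*s^14) + (-(15/16)*st*ct + (9/8)*st*ct^5 - (15/4)*st^3*ct^3 + (9/8)*st^5*ct) * (14*s*c^13 - 364*s^3*c^11 + 2002*s^5*c^9 - 3432*s^7*c^7 + 2002*s^9*c^5 - 364*s^11*c^3 + 14*s^13*c)) + (((-(3/16)*ct^4 + (9/8)*st^2*ct^2 - (3/16)*st^4) * (1*c^16 - 120*s^2*c^14 + 1820*s^4*c^12 - 8008*s^6*c^10 + 12870*s^8*c^8 - 8008*s^10*c^6 + 1820*s^12*c^4 - 120*s^14*c^2 + 1*s^16)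 + (-(3/4)*st*ct^3 + (3/4)*st^3*ct) * (16*s*c^15 - 560*s^3*c^13 + 4368*s^5*c^11 - 11440*s^7*c^9 + 11440*s^9*c^7 - 4368*s^11*c^5 + 560*s^13*c^3 - 16*s^15*c)) + ((-(1/32)*ct^6 + (15/32)*st^2*ct^4 - (15/32)*st^4*ct^2 + (1/32)*st^6) * (1*c^18 - 153*s^2*c^16 + 3060*s^4*c^14 - 18564*s^6*c^12 + 43758*s^8*c^10 - 43758*s^10*c^8 + 18564*s^12*c^6 - 3060*s^14*c^4 + 153*s^16*c^2 - 1*s^18) + (-(3/16)*st*ct^5 + (5/8)*st^3*ct^3 - (3/16)*st^5*ct) * (18*s*c^17 - 816*s^3*c^15 + 8568*s^5*c^13 - 31824*s^7*c^11 + 48620*s^9*c^9 - 31824*s^11*c^7 + 8568*s^13*c^5 - 816*s^15*c^3 + 18*s^17*c)))))))))) := by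
  linear_combination ((25/4) - (45/16)*ct^4 + (135/8)*st^2*ct^2 - (45/16)*st^4 + (25/4)*c^2 + (75/32)*c^2*ct^2 - (45/16)*c^2*ct^4 - (9/32)*c^2*ct^6 - (75/32)*c^2*st^2 + (135/8)*c^2*st^2*ct^2 + (135/32)*c^2*st^2*ct^4 - (45/16)*c^2*st^4 - (135/32)*c^2*st^4*ct^2 + (9/32)*c^2*st^6 - (25/8)*c^4 + (75/32)*c^4*ct^2 + (33/16)*c^4*ct^4 - (9/32)*c^4*ct^6 - (75/32)*c^4*st^2 - (99/8)*c^4*st^2*ct^2 + (135/32)*c^4*st^2*ct^4 + (33/16)*c^4*st^4 - (135/32)*c^4*st^4*ct^2 + (9/32)*c^4*st^6 - (10265/8)*c^6 + (15345/8)*c^6*ct^2 - (12255/16)*c^6*ct^4 + (2053/16)*c^6*ct^6 - (15345/8)*c^6*st^2 + (36765/8)*c^6*st^2*ct^2 - (30795/16)*c^6*st^2*ct^4 - (12255/16)*c^6*st^4 + (30795/16)*c^6*st^4*ct^2 + (63467/16)*c^6*st^6 + (20485/8)*c^8 - (61455/8)*c^8*ct^2 + (122865/16)*c^8*ct^4 -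 (40955/16)*c^8*ct^6 + (61455/8)*c^8*st^2 - (368595/8)*c^8*st^2*ct^2 + (614325/16)*c^8*st^2*ct^4 + (122865/16)*c^8*st^4 + (368715/16)*c^8*st^4*ct^2 - (286645/16)*c^8*st^6 - (10235/8)*c^10 + (307215/32)*c^10*ct^2 - (307215/16)*c^10*ct^4 + (348155/32)*c^10*ct^6 - (307215/32)*c^10*st^2 + (921645/8)*c^10*st^2*ct^2 - (3256245/32)*c^10*st^2*ct^4 - (307215/16)*c^10*st^4 - (2641995/32)*c^10*st^4*ct^2 + (962245/32)*c^10*st^6 - (122865/32)*c^12*ct^2 + (294915/16)*c^12*ct^4 - (466949/32)*c^12*ct^6 + (122865/32)*c^12*st^2 - (884745/8)*c^12*st^2*ct^2 + (3072075/32)*c^12*st^2*ct^4 + (294915/16)*c^12*st^4 + (2826165/32)*c^12*st^4*ct^2 - (712379/32)*c^12*st^6 - (98301/16)*c^14*ct^4 + (196609/32)*c^14*ct^6 + (294903/8)*c^14*st^2*ct^2 - (983055/32)*c^14*st^2*ct^4 - (98301/16)*c^14*st^4 - (983025/32)*c^14*st^4*ct^2 + (196447/32)*c^14*st^6 + (1/32)*c^16*ct^6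 - (15/32)*c^16*st^2*ct^4 + (15/32)*c^16*st^4*ct^2 + (31/32)*c^16*st^6 + (525/8)*s*c*st*ct - (63/8)*s*c*st*ct^5 + (105/4)*s*c*st^3*ct^3 - (63/8)*s*c*st^5*ct + (525/8)*s*c^3*st*ct + 42*s*c^3*st*ct^3 - (63/8)*s*c^3*st*ct^5 - 42*s*c^3*st^3*ct + (105/4)*s*c^3*st^3*ct^3 - (63/8)*s*c^3*st^5*ct - (105/2)*s*c^5*st*ct + 42*s*c^5*st*ct^3 + (63/4)*s*c^5*st*ct^5 - 42*s*c^5*st^3*ct - (105/2)*s*c^5*st^3*ct^3 + (39/4)*s*c^5*st^5*ct - (15465/2)*s*c^7*st*ct + 12246*s*c^7*st*ct^3 - (18369/4)*s*c^7*st*ct^5 - 12246*s*c^7*st^3*ct + (30615/2)*s*c^7*st^3*ct^3 + (79959/4)*s*c^7*st^5*ct + (122985/8)*s*c^9*st*ct - 49194*s*c^9*st*ct^3 + (270237/8)*s*c^9*st*ct^5 + 49194*s*c^9*st^3*ct - (122715/4)*s*c^9*st^3*ct^3 - (515907/8)*s*c^9*st^5*ct - (61335/8)*s*c^11*st*ct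 + 61452*s*c^11*st*ct^3 - (430179/8)*s*c^11*st*ct^5 - 61452*s*c^11*st^3*ct + (61605/4)*s*c^11*st^3*ct^3 + (552189/8)*s*c^11*st^5*ct - 24564*s*c^13*st*ct^3 + (196635/8)*s*c^13*st*ct^5 + 24564*s*c^13*st^3*ct - (45/4)*s*c^13*st^3*ct^3 - (196053/8)*s*c^13*st^5*ct + (27/8)*s*c^15*st*ct^5 - (45/4)*s*c^15*st^3*ct^3 - (117/8)*s*c^15*st^5*ct + (25/4)*s^2 - (75/32)*s^2*ct^2 - (45/16)*s^2*ct^4 + (9/32)*s^2*ct^6 + (75/32)*s^2*st^2 + (135/8)*s^2*st^2*ct^2 - (135/32)*s^2*st^2*ct^4 - (45/16)*s^2*st^4 + (135/32)*s^2*st^4*ct^2 - (9/32)*s^2*st^6 + (275/4)*s^2*c^2 - (279/8)*s^2*c^2*ct^4 + (837/4)*s^2*c^2*st^2*ct^2 - (279/8)*s^2*c^2*st^4 + (525/8)*s^2*c^4 + (525/8)*s^2*c^4*ct^2 - (525/16)*s^2*c^4*ct^4 - (147/16)*s^2*c^4*ct^6 - (525/8)*s^2*c^4*st^2 + (1575/8)*s^2*c^4*st^2*ct^2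 + (2205/16)*s^2*c^4*st^2*ct^4 - (525/16)*s^2*c^4*st^4 - (2445/16)*s^2*c^4*st^4*ct^2 + (147/16)*s^2*c^4*st^6 - (2645/2)*s^2*c^6 + (7935/4)*s^2*c^6*ct^2 - (2859/4)*s^2*c^6*ct^4 + (953/8)*s^2*c^6*ct^6 - (7935/4)*s^2*c^6*st^2 + (8577/2)*s^2*c^6*st^2*ct^2 - (14295/8)*s^2*c^6*st^2*ct^4 - (2859/4)*s^2*c^6*st^4 + (13935/8)*s^2*c^6*st^4*ct^2 + (31663/8)*s^2*c^6*st^6 + (9905/8)*s^2*c^8 - (185715/32)*s^2*c^8*ct^2 + (111429/16)*s^2*c^8*ct^4 - (77423/32)*s^2*c^8*ct^6 + (185715/32)*s^2*c^8*st^2 - (334287/8)*s^2*c^8*st^2*ct^2 + (1161345/32)*s^2*c^8*st^2*ct^4 + (111429/16)*s^2*c^8*st^4 + (807615/32)*s^2*c^8*st^4*ct^2 - (444433/32)*s^2*c^8*st^6 + (30375/8)*s^2*c^10*ct^2 - (98487/8)*s^2*c^10*ct^4 + (67683/8)*s^2*c^10*ct^6 - (30375/8)*s^2*c^10*st^2 +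 (295461/4)*s^2*c^10*st^2*ct^2 - (523725/8)*s^2*c^10*st^2*ct^4 - (98487/8)*s^2*c^10*st^4 - (458115/8)*s^2*c^10*st^4*ct^2 + (128013/8)*s^2*c^10*st^6 + (97941/16)*s^2*c^12*ct^4 - (196763/32)*s^2*c^12*ct^6 - (293823/8)*s^2*c^12*st^2*ct^2 + (985365/32)*s^2*c^12*st^2*ct^4 + (97941/16)*s^2*c^12*st^4 + (970635/32)*s^2*c^12*st^4*ct^2 - (194021/32)*s^2*c^12*st^6 - (77/16)*s^2*c^14*ct^6 + (1155/16)*s^2*c^14*st^2*ct^4 + (1005/16)*s^2*c^14*st^4*ct^2 - (227/16)*s^2*c^14*st^6 + (525/8)*s^3*c*st*ct - 42*s^3*c*st*ct^3 - (63/8)*s^3*c*st*ct^5 + 42*s^3*c*st^3*ct + (105/4)*s^3*c*st^3*ct^3 - (63/8)*s^3*c*st^5*ct + 525*s^3*c^3*st*ct - (189/2)*s^3*c^3*st*ct^5 + 295*s^3*c^3*st^3*ct^3 - (189/2)*s^3*c^3*st^5*ct + (945/2)*s^3*c^5*st*ct + 630*s^3*c^5*st*ct^3 - (315/4)*s^3*c^5*st*ct^5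 - 630*s^3*c^5*st^3*ct + (245/2)*s^3*c^5*st^3*ct^3 - (675/4)*s^3*c^5*st^5*ct - (16095/2)*s^3*c^7*st*ct + 12876*s^3*c^7*st*ct^3 - (8667/2)*s^3*c^7*st*ct^5 - 12876*s^3*c^7*st^3*ct + 14245*s^3*c^7*st^3*ct^3 + (40437/2)*s^3*c^7*st^5*ct + (58605/8)*s^3*c^9*st*ct - 37308*s^3*c^9*st*ct^3 + (235569/8)*s^3*c^9*st*ct^5 + 37308*s^3*c^9*st^3*ct - (63495/4)*s^3*c^9*st^3*ct^3 - (349359/8)*s^3*c^9*st^5*ct + 24144*s^3*c^11*st*ct^3 - (98943/4)*s^3*c^11*st*ct^5 - 24144*s^3*c^11*st^3*ct + (2145/2)*s^3*c^11*st^3*ct^3 + (94497/4)*s^3*c^11*st^5*ct - (1251/8)*s^3*c^13*st*ct^5 - (75/4)*s^3*c^13*st^3*ct^3 + (1101/8)*s^3*c^13*st^5*ct - (25/8)*s^4 - (75/32)*s^4*ct^2 + (33/16)*s^4*ct^4 + (9/32)*s^4*ct^6 + (75/32)*s^4*st^2 - (99/8)*s^4*st^2*ct^2 - (135/32)*s^4*st^2*ct^4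 + (33/16)*s^4*st^4 + (135/32)*s^4*st^4*ct^2 - (9/32)*s^4*st^6 + (525/8)*s^4*c^2 - (525/8)*s^4*c^2*ct^2 - (525/16)*s^4*c^2*ct^4 + (147/16)*s^4*c^2*ct^6 + (525/8)*s^4*c^2*st^2 + (1575/8)*s^4*c^2*st^2*ct^2 - (2445/16)*s^4*c^2*st^2*ct^4 - (525/16)*s^4*c^2*st^4 + (2205/16)*s^4*c^2*st^4*ct^2 - (147/16)*s^4*c^2*st^6 + (1575/4)*s^4*c^4 - (2205/8)*s^4*c^4*ct^4 + (6615/4)*s^4*c^4*st^2*ct^2 - 165*s^4*c^4*st^2*ct^4 - (2205/8)*s^4*c^4*st^4 - 165*s^4*c^4*st^4*ct^2 - (3715/4)*s^4*c^6 + (39615/16)*s^4*c^6*ct^2 - (7923/8)*s^4*c^6*ct^4 + (331/16)*s^4*c^6*ct^6 - (39615/16)*s^4*c^6*st^2 + (23769/4)*s^4*c^6*st^2*ct^2 - (15045/16)*s^4*c^6*st^2*ct^4 - (7923/8)*s^4*c^6*st^4 - (7515/16)*s^4*c^6*st^4*ct^2 + (62741/16)*s^4*c^6*st^6 - (106485/32)*s^4*c^8*ct^2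 + (104493/16)*s^4*c^8*ct^4 - (76761/32)*s^4*c^8*ct^6 + (106485/32)*s^4*c^8*st^2 - (313479/8)*s^4*c^8*st^2*ct^2 + (1125495/32)*s^4*c^8*st^2*ct^4 + (104493/16)*s^4*c^8*st^4 + (821385/32)*s^4*c^8*st^4*ct^2 - (301671/32)*s^4*c^8*st^6 - (92481/16)*s^4*c^10*ct^4 + (199977/32)*s^4*c^10*ct^6 + (277443/8)*s^4*c^10*st^2*ct^2 - (1020615/32)*s^4*c^10*st^2*ct^4 - (92481/16)*s^4*c^10*st^4 - (849945/32)*s^4*c^10*st^4*ct^2 + (178455/32)*s^4*c^10*st^6 + (1607/16)*s^4*c^12*ct^6 - (4665/16)*s^4*c^12*st^2*ct^4 - (5415/16)*s^4*c^12*st^4*ct^2 + (857/16)*s^4*c^12*st^6 - (105/2)*s^5*c*st*ct - 42*s^5*c*st*ct^3 + (39/4)*s^5*c*st*ct^5 + 42*s^5*c*st^3*ct - (105/2)*s^5*c*st^3*ct^3 + (63/4)*s^5*c*st^5*ct + (945/2)*s^5*c^3*st*ct - 630*s^5*c^3*st*ct^3 - (675/4)*s^5*c^3*st*ct^5 + 630*s^5*c^3*st^3*ct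 + (245/2)*s^5*c^3*st^3*ct^3 - (315/4)*s^5*c^3*st^5*ct + (10395/4)*s^5*c^5*st*ct - (5625/4)*s^5*c^5*st*ct^5 + (3055/2)*s^5*c^5*st^3*ct^3 - (5625/4)*s^5*c^5*st^5*ct - (21795/4)*s^5*c^7*st*ct + 16440*s^5*c^7*st*ct^3 - (27279/4)*s^5*c^7*st*ct^5 - 16440*s^5*c^7*st^3*ct + (27225/2)*s^5*c^7*st^3*ct^3 + (73809/4)*s^5*c^7*st^5*ct - 20868*s^5*c^9*st*ct^3 + (192549/8)*s^5*c^9*st*ct^5 + 20868*s^5*c^9*st^3*ct - (28515/4)*s^5*c^9*st^3*ct^3 - (153483/8)*s^5*c^9*st^5*ct + (2439/8)*s^5*c^11*st*ct^5 + (255/4)*s^5*c^11*st^3*ct^3 - (1929/8)*s^5*c^11*st^5*ct - (25/8)*s^6 + (15/8)*s^6*ct^2 + (33/16)*s^6*ct^4 - (21/16)*s^6*ct^6 - (15/8)*s^6*st^2 - (99/8)*s^6*st^2*ct^2 + (75/16)*s^6*st^2*ct^4 + (33/16)*s^6*st^4 - (75/16)*s^6*st^4*ct^2 + (5/16)*s^6*st^6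 - (85/2)*s^6*c^2 - (255/4)*s^6*c^2*ct^2 + (213/4)*s^6*c^2*ct^4 - (81/8)*s^6*c^2*ct^6 + (255/4)*s^6*c^2*st^2 - (639/2)*s^6*c^2*st^2*ct^2 - (1425/8)*s^6*c^2*st^2*ct^4 + (213/4)*s^6*c^2*st^4 + (1065/8)*s^6*c^2*st^4*ct^2 - (71/8)*s^6*c^2*st^6 + (1405/4)*s^6*c^4 - (8895/16)*s^6*c^4*ct^2 - (1779/8)*s^6*c^4*ct^4 - (747/16)*s^6*c^4*ct^6 + (8895/16)*s^6*c^4*st^2 + (5337/4)*s^6*c^4*st^2*ct^2 - (38235/16)*s^6*c^4*st^2*ct^4 - (1779/8)*s^6*c^4*st^4 + (15675/16)*s^6*c^4*st^4*ct^2 - (1717/16)*s^6*c^4*st^6 + 1920*s^6*c^6*ct^2 - (9009/4)*s^6*c^6*ct^4 - 566*s^6*c^6*ct^6 - 1920*s^6*c^6*st^2 + (27027/2)*s^6*c^6*st^2*ct^2 - 6510*s^6*c^6*st^2*ct^4 - (9009/4)*s^6*c^6*st^4 - 2670*s^6*c^6*st^4*ct^2 + 3274*s^6*c^6*st^6 +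 (68457/16)*s^6*c^8*ct^4 - (151771/32)*s^6*c^8*ct^6 - (205371/8)*s^6*c^8*st^2*ct^2 + (997365/32)*s^6*c^8*st^2*ct^4 + (68457/16)*s^6*c^8*st^4 + (445515/32)*s^6*c^8*st^4*ct^2 - (127045/32)*s^6*c^8*st^6 + (775/16)*s^6*c^10*ct^6 + (1335/16)*s^6*c^10*st^2*ct^4 + (345/16)*s^6*c^10*st^4*ct^2 - (215/16)*s^6*c^10*st^6 - (105/2)*s^7*c*st*ct + 42*s^7*c*st*ct^3 + (87/4)*s^7*c*st*ct^5 - 42*s^7*c*st^3*ct - (105/2)*s^7*c*st^3*ct^3 + (63/4)*s^7*c*st^5*ct - (735/2)*s^7*c^3*st*ct - 588*s^7*c^3*st*ct^3 + (501/2)*s^7*c^3*st*ct^5 + 588*s^7*c^3*st^3*ct - 1115*s^7*c^3*st^3*ct^3 + (549/2)*s^7*c^3*st^5*ct + (8925/4)*s^7*c^5*st*ct - 4152*s^7*c^5*st*ct^3 - (6063/4)*s^7*c^5*st*ct^5 + 4152*s^7*c^5*st^3*ct - (3495/2)*s^7*c^5*st^3*ct^3 - (8847/4)*s^7*c^5*st^5*ct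 + 12288*s^7*c^7*st*ct^3 - (30873/2)*s^7*c^7*st*ct^5 - 12288*s^7*c^7*st^3*ct + 14295*s^7*c^7*st^3*ct^3 + (18279/2)*s^7*c^7*st^5*ct + (4257/8)*s^7*c^9*st*ct^5 + (825/4)*s^7*c^9*st^3*ct^3 - (2607/8)*s^7*c^9*st^5*ct + (5/8)*s^8 + (15/8)*s^8*ct^2 - (15/16)*s^8*ct^4 + (75/16)*s^8*ct^6 - (15/8)*s^8*st^2 + (45/8)*s^8*st^2*ct^2 + (75/16)*s^8*st^2*ct^4 - (15/16)*s^8*st^4 - (75/16)*s^8*st^4*ct^2 + (5/16)*s^8*st^6 - (335/8)*s^8*c^2 + (1395/32)*s^8*c^2*ct^2 + (837/16)*s^8*c^2*ct^4 + (2031/32)*s^8*c^2*ct^6 - (1395/32)*s^8*c^2*st^2 - (2511/8)*s^8*c^2*st^2*ct^2 + (8895/32)*s^8*c^2*st^2*ct^4 + (837/16)*s^8*c^2*st^4 - (6015/32)*s^8*c^2*st^4*ct^2 + (401/32)*s^8*c^2*st^6 - (16395/32)*s^8*c^4*ct^2 + (6189/16)*s^8*c^4*ct^4 + (17817/32)*s^8*c^4*ct^6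 + (16395/32)*s^8*c^4*st^2 - (18567/8)*s^8*c^4*st^2*ct^2 - (38775/32)*s^8*c^4*st^2*ct^4 + (6189/16)*s^8*c^4*st^4 + (19575/32)*s^8*c^4*st^4*ct^2 - (3033/32)*s^8*c^4*st^6 - (29847/16)*s^8*c^6*ct^4 + (69563/32)*s^8*c^6*ct^6 + (89541/8)*s^8*c^6*st^2*ct^2 - (537525/32)*s^8*c^6*st^2*ct^4 - (29847/16)*s^8*c^6*st^4 + (14325/32)*s^8*c^6*st^4*ct^2 + (44837/32)*s^8*c^6*st^6 - 139*s^8*c^8*ct^6 + 870*s^8*c^8*st^2*ct^4 + 870*s^8*c^8*st^4*ct^2 - 139*s^8*c^8*st^6 + (105/8)*s^9*c*st*ct + 42*s^9*c*st*ct^3 + (189/8)*s^9*c*st*ct^5 - 42*s^9*c*st^3*ct + (165/4)*s^9*c*st^3*ct^3 - (99/8)*s^9*c*st^5*ct - (2835/8)*s^9*c^3*st*ct + 444*s^9*c^3*st*ct^3 + (6993/8)*s^9*c^3*st*ct^5 - 444*s^9*c^3*st^3*ct - (2055/4)*s^9*c^3*st^3*ct^3 + (2097/8)*s^9*c^3*st^5*ct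 - 3708*s^9*c^5*st*ct^3 + (43125/8)*s^9*c^5*st*ct^5 + 3708*s^9*c^5*st^3*ct - (28515/4)*s^9*c^5*st^3*ct^3 - (4059/8)*s^9*c^5*st^5*ct - (2607/8)*s^9*c^7*st*ct^5 + (825/4)*s^9*c^7*st^3*ct^3 + (4257/8)*s^9*c^7*st^5*ct + (5/8)*s^10 - (15/32)*s^10*ct^2 - (15/16)*s^10*ct^4 - (315/32)*s^10*ct^6 + (15/32)*s^10*st^2 + (45/8)*s^10*st^2*ct^2 - (75/32)*s^10*st^2*ct^4 - (15/16)*s^10*st^4 + (75/32)*s^10*st^4*ct^2 - (5/32)*s^10*st^6 + (345/8)*s^10*c^2*ct^2 - (183/8)*s^10*c^2*ct^4 - (1011/8)*s^10*c^2*ct^6 - (345/8)*s^10*c^2*st^2 + (549/4)*s^10*c^2*st^2*ct^2 + (2685/8)*s^10*c^2*st^2*ct^4 - (183/8)*s^10*c^2*st^4 - (1485/8)*s^10*c^2*st^4*ct^2 + (99/8)*s^10*c^2*st^6 + (5823/16)*s^10*c^4*ct^4 - (18153/32)*s^10*c^4*ct^6 - (17469/8)*s^10*c^4*st^2*ct^2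 + (133095/32)*s^10*c^4*st^2*ct^4 + (5823/16)*s^10*c^4*st^4 - (37575/32)*s^10*c^4*st^4*ct^2 + (3369/32)*s^10*c^4*st^6 - (215/16)*s^10*c^6*ct^6 + (345/16)*s^10*c^6*st^2*ct^4 + (1335/16)*s^10*c^6*st^4*ct^2 + (775/16)*s^10*c^6*st^6 + (105/8)*s^11*c*st*ct - 12*s^11*c*st*ct^3 - (771/8)*s^11*c*st*ct^5 + 12*s^11*c*st^3*ct + (165/4)*s^11*c*st^3*ct^3 - (99/8)*s^11*c*st^5*ct + 432*s^11*c^3*st*ct^3 - (3807/4)*s^11*c^3*st*ct^5 - 432*s^11*c^3*st^3*ct + (2145/2)*s^11*c^3*st^3*ct^3 - (639/4)*s^11*c^3*st^5*ct - (1929/8)*s^11*c^5*st*ct^5 + (255/4)*s^11*c^5*st^3*ct^3 + (2439/8)*s^11*c^5*st^5*ct - (15/32)*s^12*ct^2 + (3/16)*s^12*ct^4 + (325/32)*s^12*ct^6 + (15/32)*s^12*st^2 - (9/8)*s^12*st^2*ct^2 - (75/32)*s^12*st^2*ct^4 + (3/16)*s^12*st^4 + (75/32)*s^12*st^4*ct^2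 - (5/32)*s^12*st^6 - (363/16)*s^12*c^2*ct^4 + (2587/32)*s^12*c^2*ct^6 + (1089/8)*s^12*c^2*st^2*ct^2 - (12405/32)*s^12*c^2*st^2*ct^4 - (363/16)*s^12*c^2*st^4 + (2325/32)*s^12*c^2*st^4*ct^2 - (155/32)*s^12*c^2*st^6 + (857/16)*s^12*c^4*ct^6 - (5415/16)*s^12*c^4*st^2*ct^4 - (4665/16)*s^12*c^4*st^4*ct^2 + (1607/16)*s^12*c^4*st^6 - 12*s^13*c*st*ct^3 + (555/8)*s^13*c*st*ct^5 + 12*s^13*c*st^3*ct - (45/4)*s^13*c*st^3*ct^3 + (27/8)*s^13*c*st^5*ct + (1101/8)*s^13*c^3*st*ct^5 - (75/4)*s^13*c^3*st^3*ct^3 - (1251/8)*s^13*c^3*st^5*ct + (3/16)*s^14*ct^4 - (161/32)*s^14*ct^6 - (9/8)*s^14*st^2*ct^2 + (15/32)*s^14*st^2*ct^4 + (3/16)*s^14*st^4 - (15/32)*s^14*st^4*ct^2 + (1/32)*s^14*st^6 - (227/16)*s^14*c^2*ct^6 + (1005/16)*s^14*c^2*st^2*ct^4 + (1155/16)*s^14*c^2*st^4*ct^2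 - (77/16)*s^14*c^2*st^6 - (117/8)*s^15*c*st*ct^5 - (45/4)*s^15*c*st^3*ct^3 + (27/8)*s^15*c*st^5*ct + (31/32)*s^16*ct^6 + (15/32)*s^16*st^2*ct^4 - (15/32)*s^16*st^4*ct^2 + (1/32)*s^16*st^6) * hs + (1280*c^6 - 640*c^6*ct^2 + 128*c^6*ct^4 + 3200*c^6*st^2 - 2048*c^6*st^2*ct^2 + 3968*c^6*st^4 - 3840*c^8 + 5760*c^8*ct^2 - 2688*c^8*ct^4 - 13440*c^8*st^2 + 43008*c^8*st^2*ct^2 - 21888*c^8*st^4 + 3840*c^10 - 13440*c^10*ct^2 + 13440*c^10*ct^4 + 21120*c^10*st^2 - 153600*c^10*st^2*ct^2 + 48000*c^10*st^4 - 1280*c^12 + 12160*c^12*ct^2 - 25472*c^12*ct^4 - 14720*c^12*st^2 + 223232*c^12*st^2*ct^2 - 52352*c^12*st^4 - 3840*c^14*ct^2 + 20736*c^14*ct^4 + 3840*c^14*st^2 - 147456*c^14*st^2*ct^2 + 28416*c^14*st^4 - 6144*c^16*ct^4 + 36864*c^16*st^2*ct^2 - 6144*c^16*st^4 + 7680*s*c^7*st*ct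 - 4608*s*c^7*st*ct^3 + 19968*s*c^7*st^3*ct - 23040*s*c^9*st*ct + 38400*s*c^9*st*ct^3 - 84480*s*c^9*st^3*ct + 23040*s*c^11*st*ct - 87552*s*c^11*st*ct^3 + 133632*s*c^11*st^3*ct - 7680*s*c^13*st*ct + 78336*s*c^13*st*ct^3 - 93696*s*c^13*st^3*ct - 24576*s*c^15*st*ct^3 + 24576*s*c^15*st^3*ct) * ht

lemma harm (K A B : ℝ) (x : ℝ) (hK : K ≠ 0) :
    HasDerivAt (fun θ : ℝ => 2*A/(K*π) * Real.sin (K*(π/2*θ)) - 2*B/(K*π) * Real.cos (K*(π/2*θ)))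
      (A * Real.cos (K*(π/2*x)) + B * Real.sin (K*(π/2*x))) x := by
  have h1 : HasDerivAt (fun θ : ℝ => K*(π/2*θ)) (K*(π/2)) x := by
    simpa [mul_assoc] using (hasDerivAt_id x).const_mul (K*(π/2))
  have hsin := (Real.hasDerivAt_sin (K*(π/2*x))).comp x h1
  have hcos := (Real.hasDerivAt_cos (K*(π/2*x))).comp x h1
  have H := (hsin.const_mul (2*A/(K*π))).sub (hcos.const_mul (2*B/(K*π)))
  refine H.congr_deriv ?_
  have hπ : π ≠ 0 := Real.pi_ne_zero
  field_simp
  ring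

/-- For the reconstruction
`x_r t θ = sin (2π·0.25·t + 2π·0.25·θ) + sin (−2π·0.25·t + 2π·0.75·θ)` of the
undersampled two-harmonic process, the sixth moment is the nonconstant function
`25/4 − (45/16)·cos (2π t)` of time, so the reconstructed process is nonstationary. -/
theorem reconstructed_sixth_moment
    (x_r : ℝ → ℝ → ℝ)
    (hx_r : ∀ t θ : ℝ, x_r t θ =
      Real.sin (2 * π * 0.25 * t + 2 * π * 0.25 * θ)
        + Real.sin (-(2 * π * 0.25 * t) + 2 * π * 0.75 * θ)) :
    (∀ t : ℝ, (1 / 4 : ℝ) * ∫ θ in (0:ℝ)..4, (x_r t θ) ^ 6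
        = 25 / 4 - (45 / 16) * Real.cos (2 * π * t)) ∧
    ∃ t₁ t₂ : ℝ,
      (1 / 4 : ℝ) * ∫ θ in (0:ℝ)..4, (x_r t₁ θ) ^ 6
        ≠ (1 / 4 : ℝ) * ∫ θ in (0:ℝ)..4, (x_r t₂ θ) ^ 6 := by
  have hmom : ∀ t : ℝ, (1 / 4 : ℝ) * ∫ θ in (0:ℝ)..4, (x_r t θ) ^ 6
      = 25 / 4 - (45 / 16) * Real.cos (2 * π * t) := by
    intro t
    have hcont : IntervalIntegrable (fun θ => x_r t θ ^ 6) MeasureTheory.volume 0 4 := by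
      apply Continuous.intervalIntegrable
      have he : (fun θ : ℝ => x_r t θ ^ 6) = fun θ : ℝ =>
          (Real.sin (2 * π * 0.25 * t + 2 * π * 0.25 * θ)
            + Real.sin (-(2 * π * 0.25 * t) + 2 * π * 0.75 * θ)) ^ 6 := by
        funext θ; rw [hx_r]
      rw [he]; fun_prop
    have hderiv : ∀ θ ∈ Set.uIcc (0:ℝ) 4, HasDerivAt (fun θ : ℝ => (((25/4) - (45/16)*Real.cos (π/2*t)^4 + (135/8)*Real.sin (π/2*t)^2*Real.cos (π/2*t)^2 - (45/16)*Real.sin (π/2*t)^4))*θ + ((2*(((75/32)*Real.cos (π/2*t)^2 - (9/32)*Real.cos (π/2*t)^6 - (75/32)*Real.sin (π/2*t)^2 + (135/32)*Real.sin (π/2*t)^2*Real.cos (π/2*t)^4 - (135/32)*Real.sin (π/2*t)^4*Real.cos (π/2*t)^2 + (9/32)*Real.sin (π/2*t)^6))/(2*π) * Real.sin (2*(π/2*θ)) - 2*(((525/16)*Real.sin (π/2*t)*Real.cos (π/2*t) - (63/16)*Real.sin (π/2*t)*Real.cos (π/2*t)^5 + (105/8)*Real.sin (π/2*t)^3*Real.cos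 (π/2*t)^3 - (63/16)*Real.sin (π/2*t)^5*Real.cos (π/2*t)))/(2*π) * Real.cos (2*(π/2*θ))) + ((2*((-(75/8) + (39/8)*Real.cos (π/2*t)^4 - (117/4)*Real.sin (π/2*t)^2*Real.cos (π/2*t)^2 + (39/8)*Real.sin (π/2*t)^4))/(4*π) * Real.sin (4*(π/2*θ)) - 2*(((21/2)*Real.sin (π/2*t)*Real.cos (π/2*t)^3 - (21/2)*Real.sin (π/2*t)^3*Real.cos (π/2*t)))/(4*π) * Real.cos (4*(π/2*θ))) + ((2*((-(135/32)*Real.cos (π/2*t)^2 + (19/32)*Real.cos (π/2*t)^6 + (135/32)*Real.sin (π/2*t)^2 - (285/32)*Real.sin (π/2*t)^2*Real.cos (π/2*t)^4 + (285/32)*Real.sin (π/2*t)^4*Real.cos (π/2*t)^2 - (19/32)*Real.sin (π/2*t)^6))/(6*π) * Real.sin (6*(π/2*θ)) - 2*((-(315/16)*Real.sin (π/2*t)*Real.cos (π/2*t) + (63/16)*Real.sin (π/2*t)*Real.cos (π/2*t)^5 - (105/8)*Real.sin (π/2*t)^3*Real.cos (π/2*t)^3 + (63/16)*Real.sin (π/2*t)^5*Real.cos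 (π/2*t)))/(6*π) * Real.cos (6*(π/2*θ))) + ((2*(((15/4) - 3*Real.cos (π/2*t)^4 + 18*Real.sin (π/2*t)^2*Real.cos (π/2*t)^2 - 3*Real.sin (π/2*t)^4))/(8*π) * Real.sin (8*(π/2*θ)) - 2*((-(21/2)*Real.sin (π/2*t)*Real.cos (π/2*t)^3 + (21/2)*Real.sin (π/2*t)^3*Real.cos (π/2*t)))/(8*π) * Real.cos (8*(π/2*θ))) + ((2*(((75/32)*Real.cos (π/2*t)^2 - (15/32)*Real.cos (π/2*t)^6 - (75/32)*Real.sin (π/2*t)^2 + (225/32)*Real.sin (π/2*t)^2*Real.cos (π/2*t)^4 - (225/32)*Real.sin (π/2*t)^4*Real.cos (π/2*t)^2 + (15/32)*Real.sin (π/2*t)^6))/(10*π) * Real.sin (10*(π/2*θ)) - 2*(((105/16)*Real.sin (π/2*t)*Real.cos (π/2*t) - (45/16)*Real.sin (π/2*t)*Real.cos (π/2*t)^5 + (75/8)*Real.sin (π/2*t)^3*Real.cos (π/2*t)^3 - (45/16)*Real.sin (π/2*t)^5*Real.cos (π/2*t)))/(10*π) * Real.cos (10*(π/2*θ))) + ((2*((-(5/8)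 + (9/8)*Real.cos (π/2*t)^4 - (27/4)*Real.sin (π/2*t)^2*Real.cos (π/2*t)^2 + (9/8)*Real.sin (π/2*t)^4))/(12*π) * Real.sin (12*(π/2*θ)) - 2*(((9/2)*Real.sin (π/2*t)*Real.cos (π/2*t)^3 - (9/2)*Real.sin (π/2*t)^3*Real.cos (π/2*t)))/(12*π) * Real.cos (12*(π/2*θ))) + ((2*((-(15/32)*Real.cos (π/2*t)^2 + (3/16)*Real.cos (π/2*t)^6 + (15/32)*Real.sin (π/2*t)^2 - (45/16)*Real.sin (π/2*t)^2*Real.cos (π/2*t)^4 + (45/16)*Real.sin (π/2*t)^4*Real.cos (π/2*t)^2 - (3/16)*Real.sin (π/2*t)^6))/(14*π) * Real.sin (14*(π/2*θ)) - 2*((-(15/16)*Real.sin (π/2*t)*Real.cos (π/2*t) + (9/8)*Real.sin (π/2*t)*Real.cos (π/2*t)^5 - (15/4)*Real.sin (π/2*t)^3*Real.cos (π/2*t)^3 + (9/8)*Real.sin (π/2*t)^5*Real.cos (π/2*t)))/(14*π) * Real.cos (14*(π/2*θ))) + ((2*((-(3/16)*Real.cos (π/2*t)^4 + (9/8)*Real.sin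 (π/2*t)^2*Real.cos (π/2*t)^2 - (3/16)*Real.sin (π/2*t)^4))/(16*π) * Real.sin (16*(π/2*θ)) - 2*((-(3/4)*Real.sin (π/2*t)*Real.cos (π/2*t)^3 + (3/4)*Real.sin (π/2*t)^3*Real.cos (π/2*t)))/(16*π) * Real.cos (16*(π/2*θ))) + (2*((-(1/32)*Real.cos (π/2*t)^6 + (15/32)*Real.sin (π/2*t)^2*Real.cos (π/2*t)^4 - (15/32)*Real.sin (π/2*t)^4*Real.cos (π/2*t)^2 + (1/32)*Real.sin (π/2*t)^6))/(18*π) * Real.sin (18*(π/2*θ)) - 2*((-(3/16)*Real.sin (π/2*t)*Real.cos (π/2*t)^5 + (5/8)*Real.sin (π/2*t)^3*Real.cos (π/2*t)^3 - (3/16)*Real.sin (π/2*t)^5*Real.cos (π/2*t)))/(18*π) * Real.cos (18*(π/2*θ))))))))))))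
        (x_r t θ ^ 6) θ := by
      intro θ _
      have H := (((hasDerivAt_id θ).const_mul (((25/4) - (45/16)*Real.cos (π/2*t)^4 + (135/8)*Real.sin (π/2*t)^2*Real.cos (π/2*t)^2 - (45/16)*Real.sin (π/2*t)^4))).add ((harm 2 (((75/32)*Real.cos (π/2*t)^2 - (9/32)*Real.cos (π/2*t)^6 - (75/32)*Real.sin (π/2*t)^2 + (135/32)*Real.sin (π/2*t)^2*Real.cos (π/2*t)^4 - (135/32)*Real.sin (π/2*t)^4*Real.cos (π/2*t)^2 + (9/32)*Real.sin (π/2*t)^6)) (((525/16)*Real.sin (π/2*t)*Real.cos (π/2*t) - (63/16)*Real.sin (π/2*t)*Real.cos (π/2*t)^5 + (105/8)*Real.sin (π/2*t)^3*Real.cos (π/2*t)^3 - (63/16)*Real.sin (π/2*t)^5*Real.cos (π/2*t))) θ (by norm_num)).add ((harm 4 ((-(75/8) + (39/8)*Real.cos (π/2*t)^4 - (117/4)*Real.sin (π/2*t)^2*Real.cos (π/2*t)^2 + (39/8)*Real.sin (π/2*t)^4)) (((21/2)*Real.sin (π/2*t)*Real.cos (π/2*t)^3 - (21/2)*Real.sin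 (π/2*t)^3*Real.cos (π/2*t))) θ (by norm_num)).add ((harm 6 ((-(135/32)*Real.cos (π/2*t)^2 + (19/32)*Real.cos (π/2*t)^6 + (135/32)*Real.sin (π/2*t)^2 - (285/32)*Real.sin (π/2*t)^2*Real.cos (π/2*t)^4 + (285/32)*Real.sin (π/2*t)^4*Real.cos (π/2*t)^2 - (19/32)*Real.sin (π/2*t)^6)) ((-(315/16)*Real.sin (π/2*t)*Real.cos (π/2*t) + (63/16)*Real.sin (π/2*t)*Real.cos (π/2*t)^5 - (105/8)*Real.sin (π/2*t)^3*Real.cos (π/2*t)^3 + (63/16)*Real.sin (π/2*t)^5*Real.cos (π/2*t))) θ (by norm_num)).add ((harm 8 (((15/4) - 3*Real.cos (π/2*t)^4 + 18*Real.sin (π/2*t)^2*Real.cos (π/2*t)^2 - 3*Real.sin (π/2*t)^4)) ((-(21/2)*Real.sin (π/2*t)*Real.cos (π/2*t)^3 + (21/2)*Real.sin (π/2*t)^3*Real.cos (π/2*t))) θ (by norm_num)).add ((harm 10 (((75/32)*Real.cos (π/2*t)^2 - (15/32)*Real.cos (π/2*t)^6 - (75/32)*Real.sin (π/2*t)^2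 + (225/32)*Real.sin (π/2*t)^2*Real.cos (π/2*t)^4 - (225/32)*Real.sin (π/2*t)^4*Real.cos (π/2*t)^2 + (15/32)*Real.sin (π/2*t)^6)) (((105/16)*Real.sin (π/2*t)*Real.cos (π/2*t) - (45/16)*Real.sin (π/2*t)*Real.cos (π/2*t)^5 + (75/8)*Real.sin (π/2*t)^3*Real.cos (π/2*t)^3 - (45/16)*Real.sin (π/2*t)^5*Real.cos (π/2*t))) θ (by norm_num)).add ((harm 12 ((-(5/8) + (9/8)*Real.cos (π/2*t)^4 - (27/4)*Real.sin (π/2*t)^2*Real.cos (π/2*t)^2 + (9/8)*Real.sin (π/2*t)^4)) (((9/2)*Real.sin (π/2*t)*Real.cos (π/2*t)^3 - (9/2)*Real.sin (π/2*t)^3*Real.cos (π/2*t))) θ (by norm_num)).add ((harm 14 ((-(15/32)*Real.cos (π/2*t)^2 + (3/16)*Real.cos (π/2*t)^6 + (15/32)*Real.sin (π/2*t)^2 - (45/16)*Real.sin (π/2*t)^2*Real.cos (π/2*t)^4 + (45/16)*Real.sin (π/2*t)^4*Real.cos (π/2*t)^2 - (3/16)*Real.sin (π/2*t)^6)) ((-(15/16)*Real.sin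 (π/2*t)*Real.cos (π/2*t) + (9/8)*Real.sin (π/2*t)*Real.cos (π/2*t)^5 - (15/4)*Real.sin (π/2*t)^3*Real.cos (π/2*t)^3 + (9/8)*Real.sin (π/2*t)^5*Real.cos (π/2*t))) θ (by norm_num)).add ((harm 16 ((-(3/16)*Real.cos (π/2*t)^4 + (9/8)*Real.sin (π/2*t)^2*Real.cos (π/2*t)^2 - (3/16)*Real.sin (π/2*t)^4)) ((-(3/4)*Real.sin (π/2*t)*Real.cos (π/2*t)^3 + (3/4)*Real.sin (π/2*t)^3*Real.cos (π/2*t))) θ (by norm_num)).add (harm 18 ((-(1/32)*Real.cos (π/2*t)^6 + (15/32)*Real.sin (π/2*t)^2*Real.cos (π/2*t)^4 - (15/32)*Real.sin (π/2*t)^4*Real.cos (π/2*t)^2 + (1/32)*Real.sin (π/2*t)^6)) ((-(3/16)*Real.sin (π/2*t)*Real.cos (π/2*t)^5 + (5/8)*Real.sin (π/2*t)^3*Real.cos (π/2*t)^3 - (3/16)*Real.sin (π/2*t)^5*Real.cos (π/2*t))) θ (by norm_num)))))))))))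
      have hv : x_r t θ ^ 6 = (((25/4) - (45/16)*Real.cos (π/2*t)^4 + (135/8)*Real.sin (π/2*t)^2*Real.cos (π/2*t)^2 - (45/16)*Real.sin (π/2*t)^4)) * 1 + (((((75/32)*Real.cos (π/2*t)^2 - (9/32)*Real.cos (π/2*t)^6 - (75/32)*Real.sin (π/2*t)^2 + (135/32)*Real.sin (π/2*t)^2*Real.cos (π/2*t)^4 - (135/32)*Real.sin (π/2*t)^4*Real.cos (π/2*t)^2 + (9/32)*Real.sin (π/2*t)^6)) * Real.cos (2*(π/2*θ)) + (((525/16)*Real.sin (π/2*t)*Real.cos (π/2*t) - (63/16)*Real.sin (π/2*t)*Real.cos (π/2*t)^5 + (105/8)*Real.sin (π/2*t)^3*Real.cos (π/2*t)^3 - (63/16)*Real.sin (π/2*t)^5*Real.cos (π/2*t))) * Real.sin (2*(π/2*θ))) + ((((-(75/8) + (39/8)*Real.cos (π/2*t)^4 - (117/4)*Real.sin (π/2*t)^2*Real.cos (π/2*t)^2 + (39/8)*Real.sin (π/2*t)^4)) * Real.cos (4*(π/2*θ)) + (((21/2)*Real.sin (π/2*t)*Real.cos (π/2*t)^3 - (21/2)*Real.sin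 (π/2*t)^3*Real.cos (π/2*t))) * Real.sin (4*(π/2*θ))) + ((((-(135/32)*Real.cos (π/2*t)^2 + (19/32)*Real.cos (π/2*t)^6 + (135/32)*Real.sin (π/2*t)^2 - (285/32)*Real.sin (π/2*t)^2*Real.cos (π/2*t)^4 + (285/32)*Real.sin (π/2*t)^4*Real.cos (π/2*t)^2 - (19/32)*Real.sin (π/2*t)^6)) * Real.cos (6*(π/2*θ)) + ((-(315/16)*Real.sin (π/2*t)*Real.cos (π/2*t) + (63/16)*Real.sin (π/2*t)*Real.cos (π/2*t)^5 - (105/8)*Real.sin (π/2*t)^3*Real.cos (π/2*t)^3 + (63/16)*Real.sin (π/2*t)^5*Real.cos (π/2*t))) * Real.sin (6*(π/2*θ))) + (((((15/4) - 3*Real.cos (π/2*t)^4 + 18*Real.sin (π/2*t)^2*Real.cos (π/2*t)^2 - 3*Real.sin (π/2*t)^4)) * Real.cos (8*(π/2*θ)) + ((-(21/2)*Real.sin (π/2*t)*Real.cos (π/2*t)^3 + (21/2)*Real.sin (π/2*t)^3*Real.cos (π/2*t))) * Real.sin (8*(π/2*θ))) + (((((75/32)*Real.cos (π/2*t)^2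 - (15/32)*Real.cos (π/2*t)^6 - (75/32)*Real.sin (π/2*t)^2 + (225/32)*Real.sin (π/2*t)^2*Real.cos (π/2*t)^4 - (225/32)*Real.sin (π/2*t)^4*Real.cos (π/2*t)^2 + (15/32)*Real.sin (π/2*t)^6)) * Real.cos (10*(π/2*θ)) + (((105/16)*Real.sin (π/2*t)*Real.cos (π/2*t) - (45/16)*Real.sin (π/2*t)*Real.cos (π/2*t)^5 + (75/8)*Real.sin (π/2*t)^3*Real.cos (π/2*t)^3 - (45/16)*Real.sin (π/2*t)^5*Real.cos (π/2*t))) * Real.sin (10*(π/2*θ))) + ((((-(5/8) + (9/8)*Real.cos (π/2*t)^4 - (27/4)*Real.sin (π/2*t)^2*Real.cos (π/2*t)^2 + (9/8)*Real.sin (π/2*t)^4)) * Real.cos (12*(π/2*θ)) + (((9/2)*Real.sin (π/2*t)*Real.cos (π/2*t)^3 - (9/2)*Real.sin (π/2*t)^3*Real.cos (π/2*t))) * Real.sin (12*(π/2*θ))) + ((((-(15/32)*Real.cos (π/2*t)^2 + (3/16)*Real.cos (π/2*t)^6 + (15/32)*Real.sin (π/2*t)^2 - (45/16)*Real.sin (π/2*t)^2*Real.cos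 (π/2*t)^4 + (45/16)*Real.sin (π/2*t)^4*Real.cos (π/2*t)^2 - (3/16)*Real.sin (π/2*t)^6)) * Real.cos (14*(π/2*θ)) + ((-(15/16)*Real.sin (π/2*t)*Real.cos (π/2*t) + (9/8)*Real.sin (π/2*t)*Real.cos (π/2*t)^5 - (15/4)*Real.sin (π/2*t)^3*Real.cos (π/2*t)^3 + (9/8)*Real.sin (π/2*t)^5*Real.cos (π/2*t))) * Real.sin (14*(π/2*θ))) + ((((-(3/16)*Real.cos (π/2*t)^4 + (9/8)*Real.sin (π/2*t)^2*Real.cos (π/2*t)^2 - (3/16)*Real.sin (π/2*t)^4)) * Real.cos (16*(π/2*θ)) + ((-(3/4)*Real.sin (π/2*t)*Real.cos (π/2*t)^3 + (3/4)*Real.sin (π/2*t)^3*Real.cos (π/2*t))) * Real.sin (16*(π/2*θ))) + (((-(1/32)*Real.cos (π/2*t)^6 + (15/32)*Real.sin (π/2*t)^2*Real.cos (π/2*t)^4 - (15/32)*Real.sin (π/2*t)^4*Real.cos (π/2*t)^2 + (1/32)*Real.sin (π/2*t)^6)) * Real.cos (18*(π/2*θ)) + ((-(3/16)*Real.sin (π/2*t)*Real.cos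 (π/2*t)^5 + (5/8)*Real.sin (π/2*t)^3*Real.cos (π/2*t)^3 - (3/16)*Real.sin (π/2*t)^5*Real.cos (π/2*t))) * Real.sin (18*(π/2*θ))))))))))) := by
        rw [hx_r, show 2*π*0.25*t + 2*π*0.25*θ = π/2*t + π/2*θ by ring, show -(2*π*0.25*t) + 2*π*0.75*θ = 3*(π/2*θ) - π/2*t by ring, Real.sin_add, Real.sin_sub, sinm3 (π/2*θ), cosm3 (π/2*θ), cosm2 (π/2*θ), sinm2 (π/2*θ), cosm4 (π/2*θ), sinm4 (π/2*θ), cosm6 (π/2*θ), sinm6 (π/2*θ), cosm8 (π/2*θ), sinm8 (π/2*θ), cosm10 (π/2*θ), sinm10 (π/2*θ), cosm12 (π/2*θ), sinm12 (π/2*θ), cosm14 (π/2*θ), sinm14 (π/2*θ), cosm16 (π/2*θ), sinm16 (π/2*θ), cosm18 (π/2*θ), sinm18 (π/2*θ)]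
        linear_combination key (Real.sin (π/2*θ)) (Real.cos (π/2*θ)) (Real.sin (π/2*t)) (Real.cos (π/2*t)) (Real.sin_sq_add_cos_sq (π/2*θ)) (Real.sin_sq_add_cos_sq (π/2*t))
      rw [hv]; exact H
    have hFTC := intervalIntegral.integral_eq_sub_of_hasDerivAt hderiv hcont
    rw [hFTC]
    have e2s : Real.sin ((2:ℝ)*(π/2*(4:ℝ))) = 0 := by
      rw [show (2:ℝ)*(π/2*(4:ℝ)) = ((4:ℕ):ℝ)*π by push_cast; ring]; exact Real.sin_nat_mul_pi 4
    have e2c : Real.cos ((2:ℝ)*(π/2*(4:ℝ))) = 1 := by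
      rw [show (2:ℝ)*(π/2*(4:ℝ)) = ((2:ℕ):ℝ)*(2*π) by push_cast; ring]; exact Real.cos_nat_mul_two_pi 2
    have z2s : Real.sin ((2:ℝ)*(π/2*(0:ℝ))) = 0 := by
      rw [show (2:ℝ)*(π/2*(0:ℝ)) = 0 by ring]; exact Real.sin_zero
    have z2c : Real.cos ((2:ℝ)*(π/2*(0:ℝ))) = 1 := by
      rw [show (2:ℝ)*(π/2*(0:ℝ)) = 0 by ring]; exact Real.cos_zero
    have e4s : Real.sin ((4:ℝ)*(π/2*(4:ℝ))) = 0 := by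
      rw [show (4:ℝ)*(π/2*(4:ℝ)) = ((8:ℕ):ℝ)*π by push_cast; ring]; exact Real.sin_nat_mul_pi 8
    have e4c : Real.cos ((4:ℝ)*(π/2*(4:ℝ))) = 1 := by
      rw [show (4:ℝ)*(π/2*(4:ℝ)) = ((4:ℕ):ℝ)*(2*π) by push_cast; ring]; exact Real.cos_nat_mul_two_pi 4
    have z4s : Real.sin ((4:ℝ)*(π/2*(0:ℝ))) = 0 := by
      rw [show (4:ℝ)*(π/2*(0:ℝ)) = 0 by ring]; exact Real.sin_zero
    have z4c : Real.cos ((4:ℝ)*(π/2*(0:ℝ))) = 1 := by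
      rw [show (4:ℝ)*(π/2*(0:ℝ)) = 0 by ring]; exact Real.cos_zero
    have e6s : Real.sin ((6:ℝ)*(π/2*(4:ℝ))) = 0 := by
      rw [show (6:ℝ)*(π/2*(4:ℝ)) = ((12:ℕ):ℝ)*π by push_cast; ring]; exact Real.sin_nat_mul_pi 12
    have e6c : Real.cos ((6:ℝ)*(π/2*(4:ℝ))) = 1 := by
      rw [show (6:ℝ)*(π/2*(4:ℝ)) = ((6:ℕ):ℝ)*(2*π) by push_cast; ring]; exact Real.cos_nat_mul_two_pi 6
    have z6s : Real.sin ((6:ℝ)*(π/2*(0:ℝ))) = 0 := by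
      rw [show (6:ℝ)*(π/2*(0:ℝ)) = 0 by ring]; exact Real.sin_zero
    have z6c : Real.cos ((6:ℝ)*(π/2*(0:ℝ))) = 1 := by
      rw [show (6:ℝ)*(π/2*(0:ℝ)) = 0 by ring]; exact Real.cos_zero
    have e8s : Real.sin ((8:ℝ)*(π/2*(4:ℝ))) = 0 := by
      rw [show (8:ℝ)*(π/2*(4:ℝ)) = ((16:ℕ):ℝ)*π by push_cast; ring]; exact Real.sin_nat_mul_pi 16
    have e8c : Real.cos ((8:ℝ)*(π/2*(4:ℝ))) = 1 := by
      rw [show (8:ℝ)*(π/2*(4:ℝ)) = ((8:ℕ):ℝ)*(2*π) by push_cast; ring]; exact Real.cos_nat_mul_two_pi 8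
    have z8s : Real.sin ((8:ℝ)*(π/2*(0:ℝ))) = 0 := by
      rw [show (8:ℝ)*(π/2*(0:ℝ)) = 0 by ring]; exact Real.sin_zero
    have z8c : Real.cos ((8:ℝ)*(π/2*(0:ℝ))) = 1 := by
      rw [show (8:ℝ)*(π/2*(0:ℝ)) = 0 by ring]; exact Real.cos_zero
    have e10s : Real.sin ((10:ℝ)*(π/2*(4:ℝ))) = 0 := by
      rw [show (10:ℝ)*(π/2*(4:ℝ)) = ((20:ℕ):ℝ)*π by push_cast; ring]; exact Real.sin_nat_mul_pi 20
    have e10c : Real.cos ((10:ℝ)*(π/2*(4:ℝ))) = 1 := by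
      rw [show (10:ℝ)*(π/2*(4:ℝ)) = ((10:ℕ):ℝ)*(2*π) by push_cast; ring]; exact Real.cos_nat_mul_two_pi 10
    have z10s : Real.sin ((10:ℝ)*(π/2*(0:ℝ))) = 0 := by
      rw [show (10:ℝ)*(π/2*(0:ℝ)) = 0 by ring]; exact Real.sin_zero
    have z10c : Real.cos ((10:ℝ)*(π/2*(0:ℝ))) = 1 := by
      rw [show (10:ℝ)*(π/2*(0:ℝ)) = 0 by ring]; exact Real.cos_zero
    have e12s : Real.sin ((12:ℝ)*(π/2*(4:ℝ))) = 0 := by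
      rw [show (12:ℝ)*(π/2*(4:ℝ)) = ((24:ℕ):ℝ)*π by push_cast; ring]; exact Real.sin_nat_mul_pi 24
    have e12c : Real.cos ((12:ℝ)*(π/2*(4:ℝ))) = 1 := by
      rw [show (12:ℝ)*(π/2*(4:ℝ)) = ((12:ℕ):ℝ)*(2*π) by push_cast; ring]; exact Real.cos_nat_mul_two_pi 12
    have z12s : Real.sin ((12:ℝ)*(π/2*(0:ℝ))) = 0 := by
      rw [show (12:ℝ)*(π/2*(0:ℝ)) = 0 by ring]; exact Real.sin_zero
    have z12c : Real.cos ((12:ℝ)*(π/2*(0:ℝ))) = 1 := by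
      rw [show (12:ℝ)*(π/2*(0:ℝ)) = 0 by ring]; exact Real.cos_zero
    have e14s : Real.sin ((14:ℝ)*(π/2*(4:ℝ))) = 0 := by
      rw [show (14:ℝ)*(π/2*(4:ℝ)) = ((28:ℕ):ℝ)*π by push_cast; ring]; exact Real.sin_nat_mul_pi 28
    have e14c : Real.cos ((14:ℝ)*(π/2*(4:ℝ))) = 1 := by
      rw [show (14:ℝ)*(π/2*(4:ℝ)) = ((14:ℕ):ℝ)*(2*π) by push_cast; ring]; exact Real.cos_nat_mul_two_pi 14
    have z14s : Real.sin ((14:ℝ)*(π/2*(0:ℝ))) = 0 := by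
      rw [show (14:ℝ)*(π/2*(0:ℝ)) = 0 by ring]; exact Real.sin_zero
    have z14c : Real.cos ((14:ℝ)*(π/2*(0:ℝ))) = 1 := by
      rw [show (14:ℝ)*(π/2*(0:ℝ)) = 0 by ring]; exact Real.cos_zero
    have e16s : Real.sin ((16:ℝ)*(π/2*(4:ℝ))) = 0 := by
      rw [show (16:ℝ)*(π/2*(4:ℝ)) = ((32:ℕ):ℝ)*π by push_cast; ring]; exact Real.sin_nat_mul_pi 32
    have e16c : Real.cos ((16:ℝ)*(π/2*(4:ℝ))) = 1 := by
      rw [show (16:ℝ)*(π/2*(4:ℝ)) = ((16:ℕ):ℝ)*(2*π) by push_cast; ring]; exact Real.cos_nat_mul_two_pi 16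
    have z16s : Real.sin ((16:ℝ)*(π/2*(0:ℝ))) = 0 := by
      rw [show (16:ℝ)*(π/2*(0:ℝ)) = 0 by ring]; exact Real.sin_zero
    have z16c : Real.cos ((16:ℝ)*(π/2*(0:ℝ))) = 1 := by
      rw [show (16:ℝ)*(π/2*(0:ℝ)) = 0 by ring]; exact Real.cos_zero
    have e18s : Real.sin ((18:ℝ)*(π/2*(4:ℝ))) = 0 := by
      rw [show (18:ℝ)*(π/2*(4:ℝ)) = ((36:ℕ):ℝ)*π by push_cast; ring]; exact Real.sin_nat_mul_pi 36
    have e18c : Real.cos ((18:ℝ)*(π/2*(4:ℝ))) = 1 := by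
      rw [show (18:ℝ)*(π/2*(4:ℝ)) = ((18:ℕ):ℝ)*(2*π) by push_cast; ring]; exact Real.cos_nat_mul_two_pi 18
    have z18s : Real.sin ((18:ℝ)*(π/2*(0:ℝ))) = 0 := by
      rw [show (18:ℝ)*(π/2*(0:ℝ)) = 0 by ring]; exact Real.sin_zero
    have z18c : Real.cos ((18:ℝ)*(π/2*(0:ℝ))) = 1 := by
      rw [show (18:ℝ)*(π/2*(0:ℝ)) = 0 by ring]; exact Real.cos_zero
    simp only [e2s, e2c, z2s, z2c, e4s, e4c, z4s, z4c, e6s, e6c, z6s, z6c, e8s, e8c, z8s, z8c, e10s, e10c, z10s, z10c, e12s, e12c, z12s, z12c, e14s, e14c, z14s, z14c, e16s, e16c, z16s, z16c, e18s, e18c, z18s, z18c]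
    rw [show 2*π*t = 4*(π/2*t) by ring, cosm4 (π/2*t)]
    ring
  refine ⟨hmom, 0, 1/2, ?_⟩
  rw [hmom 0, hmom (1/2)]
  rw [show 2*π*(0:ℝ) = 0 by ring, show 2*π*(1/2:ℝ) = π by ring, Real.cos_zero, Real.cos_pi]
  norm_num
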